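/- One-step quadratic error bound for the Picard–Newton iteration (the key estimate in the proof of Theorem 3.2): suppose α := Mν⁻²‖f‖ < 1, let u ∈ V be a weak NSE solution, let uₖ ∈ V, let û_{k+1} be a Picard update of uₖ, and let u_{k+1} be a Newton update of û_{k+1}. Then ‖u − u_{k+1}‖ ≤ Mν⁻¹α²(1−α)⁻¹ ‖u − uₖ‖². -/

import Mathlib

open scoped RealInnerProductSpace

private lemma aux_div {a c ν : ℝ} (hν : 0 < ν) (ha : 0 ≤ a) (hc : 0 ≤ c)
    (h : ν * a ^ 2 ≤ c * a) : a ≤ ν⁻¹ * c := by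
  rcases ha.eq_or_lt with h0 | h0
  · rw [← h0]; positivity
  · have h1 : ν * a ≤ c :=
      le_of_mul_le_mul_right (by nlinarith) h0
    calc a = ν⁻¹ * (ν * a) := by field_simp
    _ ≤ ν⁻¹ * c := by
        exact mul_le_mul_of_nonneg_left h1 (inv_pos.mpr hν).le

/-- One-step quadratic error bound for the Picard–Newton iteration (key
estimate in the proof of Theorem 3.2): if `α := Mν⁻²‖f‖ < 1`, `u` is a weak
NSE solution, `uhat` is a Picard update of `uk`, and `u'` is a Newton update of
`uhat`, then `‖u − u'‖ ≤ Mν⁻¹α²(1−α)⁻¹‖u − uk‖²`. -/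
theorem picard_newton_one_step_quadratic
    {V : Type*} [NormedAddCommGroup V] [InnerProductSpace ℝ V]
    (b : V →ₗ[ℝ] V →ₗ[ℝ] V →ₗ[ℝ] ℝ)
    (hskew : ∀ z w : V, b z w w = 0)
    (M : ℝ) (hM : 0 < M)
    (hbound : ∀ z w v : V, |b z w v| ≤ M * ‖z‖ * ‖w‖ * ‖v‖)
    (f : V →L[ℝ] ℝ) (ν : ℝ) (hν : 0 < ν)
    (α : ℝ) (hα : α = M * ν⁻¹ ^ 2 * ‖f‖) (hα1 : α < 1)
    (u uk uhat u' : V)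
    (hNSE : ∀ v : V, ν * ⟪u, v⟫ + b u u v = f v)
    (hPicard : ∀ v : V, ν * ⟪uhat, v⟫ + b uk uhat v = f v)
    (hNewton : ∀ v : V, ν * ⟪u', v⟫ + b uhat u' v + b u' uhat v - b uhat uhat v = f v) :
    ‖u - u'‖ ≤ M * ν⁻¹ * α ^ 2 * (1 - α)⁻¹ * ‖u - uk‖ ^ 2 := by
  have hα0 : 0 ≤ α := by rw [hα]; positivity
  have h1α : 0 < 1 - α := by linarith
  -- a priori bound on uhat
  have huhat : ‖uhat‖ ≤ ν⁻¹ * ‖f‖ := by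
    have h := hPicard uhat
    rw [hskew uk uhat, real_inner_self_eq_norm_sq] at h
    have hb : f uhat ≤ ‖f‖ * ‖uhat‖ :=
      (le_abs_self _).trans ((abs_le.mp (abs_le.mpr ⟨neg_abs_le _, le_abs_self _⟩)).2.trans
        (by simpa [Real.norm_eq_abs] using f.le_opNorm uhat))
    exact aux_div hν (norm_nonneg _) (by positivity) (by linarith)
  -- a priori bound on u
  have hu : ‖u‖ ≤ ν⁻¹ * ‖f‖ := by
    have h := hNSE u
    rw [hskew u u, real_inner_self_eq_norm_sq] at h
    have hb : f u ≤ ‖f‖ * ‖u‖ :=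
      (le_abs_self _).trans (by simpa [Real.norm_eq_abs] using f.le_opNorm u)
    exact aux_div hν (norm_nonneg _) (by positivity) (by linarith)
  -- Picard error equation
  have key1 : ν * ⟪u - uhat, u - uhat⟫ = - b (u - uk) u (u - uhat) := by
    have h1 := hNSE (u - uhat)
    have h2 := hPicard (u - uhat)
    have hsk := hskew uk (u - uhat)
    simp only [map_sub, LinearMap.sub_apply, inner_sub_left, inner_sub_right] at *
    linarith [real_inner_comm u uhat]
  have he : ‖u - uhat‖ ≤ α * ‖u - uk‖ := by
    have hb := hbound (u - uk) u (u - uhat)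
    have hq : ν * ‖u - uhat‖ ^ 2 ≤ (M * ‖u - uk‖ * ‖u‖) * ‖u - uhat‖ := by
      rw [← real_inner_self_eq_norm_sq, key1]
      exact (neg_le_abs _).trans hb
    have h3 : ‖u - uhat‖ ≤ ν⁻¹ * (M * ‖u - uk‖ * ‖u‖) :=
      aux_div hν (norm_nonneg _) (by positivity) hq
    calc ‖u - uhat‖ ≤ ν⁻¹ * (M * ‖u - uk‖ * ‖u‖) := h3
    _ ≤ ν⁻¹ * (M * ‖u - uk‖ * (ν⁻¹ * ‖f‖)) := by gcongr
    _ = α * ‖u - uk‖ := by rw [hα]; ring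
  -- Newton error equation
  have key2 : ν * ⟪u - u', u - u'⟫
      = - b (u - u') uhat (u - u') - b (u - uhat) (u - uhat) (u - u') := by
    have h1 := hNSE (u - u')
    have h2 := hNewton (u - u')
    have hsk := hskew uhat (u - u')
    simp only [map_sub, LinearMap.sub_apply, inner_sub_left, inner_sub_right] at *
    linarith [real_inner_comm u u']
  have hb1 := hbound (u - u') uhat (u - u')
  have hb2 := hbound (u - uhat) (u - uhat) (u - u')
  have hMu : M * ‖uhat‖ ≤ α * ν := by
    have := mul_le_mul_of_nonneg_left huhat hM.le
    calc M * ‖uhat‖ ≤ M * (ν⁻¹ * ‖f‖) := this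
    _ = α * ν := by rw [hα]; field_simp
  have hq2 : ((1 - α) * ν) * ‖u - u'‖ ^ 2 ≤ (M * ‖u - uhat‖ ^ 2) * ‖u - u'‖ := by
    have h0 : ν * ‖u - u'‖ ^ 2 ≤ M * ‖u - u'‖ * ‖uhat‖ * ‖u - u'‖
        + M * ‖u - uhat‖ * ‖u - uhat‖ * ‖u - u'‖ := by
      rw [← real_inner_self_eq_norm_sq, key2]
      have := (neg_le_abs (b (u - u') uhat (u - u'))).trans hb1
      have := (neg_le_abs (b (u - uhat) (u - uhat) (u - u'))).trans hb2
      linarith [abs_le.mp (abs_le.mpr ⟨neg_abs_le (b (u - u') uhat (u - u')), le_abs_self _⟩)]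
    nlinarith [sq_nonneg ‖u - u'‖, norm_nonneg (u - u'), norm_nonneg uhat, hν]
  have h4 : ‖u - u'‖ ≤ ((1 - α) * ν)⁻¹ * (M * ‖u - uhat‖ ^ 2) :=
    aux_div (by positivity) (norm_nonneg _) (by positivity) hq2
  calc ‖u - u'‖ ≤ ((1 - α) * ν)⁻¹ * (M * ‖u - uhat‖ ^ 2) := h4
  _ ≤ ((1 - α) * ν)⁻¹ * (M * (α * ‖u - uk‖) ^ 2) := by
      gcongr
  _ = M * ν⁻¹ * α ^ 2 * (1 - α)⁻¹ * ‖u - uk‖ ^ 2 := by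
      rw [mul_inv]; ring
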